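/- Let p ≥ 1, let λ₁,…,λ_p be distinct complex numbers, let A be the p×p companion matrix with characteristic polynomial ∏_j (z - λ_j), and let φ₀,…,φ_p be the coefficients defined by ∏_{j=1}^p (1 - e^{Δλ_j} z) = -∑_{j=0}^p φ_j z^j. Then ∑_{j=0}^p φ_j · e^{-A j Δ} = 0 (the zero matrix). -/

import Mathlib

open Matrix Polynomial

section CHhelpers

open NormedSpace

variable {𝔸 : Type*} [NormedRing 𝔸] [NormedAlgebra ℂ 𝔸] [CompleteSpace 𝔸]

/-- The entire function `g` with `exp x - 1 = x * g x`. -/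
noncomputable def CHgfun (x : 𝔸) : 𝔸 := ∑' n : ℕ, (((n + 1).factorial : ℂ))⁻¹ • x ^ n

lemma CHgfun_summable (x : 𝔸) :
    Summable fun n : ℕ => (((n + 1).factorial : ℂ))⁻¹ • x ^ n := by
  refine Summable.of_norm_bounded (NormedSpace.norm_expSeries_summable' (𝕂 := ℂ) x) ?_
  intro n
  rw [norm_smul, norm_smul]
  have h1 : ‖(((n + 1).factorial : ℂ))⁻¹‖ ≤ ‖((n.factorial : ℂ))⁻¹‖ := by
    rw [norm_inv, norm_inv, Complex.norm_natCast, Complex.norm_natCast]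
    have h2 : (n.factorial : ℝ) ≤ ((n + 1).factorial : ℝ) := by
      exact_mod_cast Nat.factorial_le (Nat.le_succ n)
    have h3 : (0 : ℝ) < n.factorial := by exact_mod_cast n.factorial_pos
    exact inv_anti₀ h3 h2
  exact mul_le_mul_of_nonneg_right h1 (norm_nonneg _)

lemma CHexp_sub_one (x : 𝔸) : exp x - 1 = x * CHgfun x := by
  have hs := expSeries_summable' (𝕂 := ℂ) x
  simp only [exp_eq_tsum ℂ]
  rw [Summable.tsum_eq_zero_add hs]
  simp only [Nat.factorial_zero, Nat.cast_one, inv_one, pow_zero, one_smul,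
    add_sub_cancel_left]
  rw [CHgfun, ← (CHgfun_summable x).tsum_mul_left x]
  congr 1
  funext n
  rw [mul_smul_comm, ← pow_succ']

lemma CHcommute_gfun {x y : 𝔸} (h : Commute y x) : Commute y (CHgfun x) := by
  show y * CHgfun x = CHgfun x * y
  unfold CHgfun
  rw [← (CHgfun_summable x).tsum_mul_left, ← (CHgfun_summable x).tsum_mul_right]
  congr 1
  funext n
  rw [mul_smul_comm, smul_mul_assoc, (h.pow_right n).eq]

lemma CHlist_prod_mul {M : Type*} [Monoid M] {ι : Type*} (l : List ι) (u v : ι → M)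
    (h : ∀ i ∈ l, ∀ j ∈ l, Commute (v i) (u j)) :
    (l.map fun i => u i * v i).prod = (l.map u).prod * (l.map v).prod := by
  induction l with
  | nil => simp
  | cons a t ih =>
    simp only [List.map_cons, List.prod_cons]
    rw [ih (fun i hi j hj => h i (List.mem_cons_of_mem _ hi) j (List.mem_cons_of_mem _ hj))]
    have hc : Commute (v a) ((t.map u).prod) := by
      refine Commute.list_prod_right _ _ ?_
      intro x hx
      obtain ⟨j, hj, rfl⟩ := List.mem_map.mp hx
      exact h a (List.mem_cons_self) j (List.mem_cons_of_mem _ hj)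
    calc u a * v a * ((t.map u).prod * (t.map v).prod)
        = u a * (v a * (t.map u).prod) * (t.map v).prod := by
          simp only [mul_assoc]
      _ = u a * ((t.map u).prod * v a) * (t.map v).prod := by rw [hc.eq]
      _ = u a * (t.map u).prod * (v a * (t.map v).prod) := by
          simp only [mul_assoc]

/-- matrix version of `CHgfun`, elaborated with the canonical matrix instances. -/
noncomputable def CHMgfun {n : ℕ} (x : Matrix (Fin n) (Fin n) ℂ) : Matrix (Fin n) (Fin n) ℂ :=
  ∑' k : ℕ, (((k + 1).factorial : ℂ))⁻¹ • x ^ k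

lemma CHMexp_sub_one {n : ℕ} (x : Matrix (Fin n) (Fin n) ℂ) :
    exp x - 1 = x * CHMgfun x := by
  letI : SeminormedRing (Matrix (Fin n) (Fin n) ℂ) := Matrix.linftyOpSemiNormedRing
  letI : NormedRing (Matrix (Fin n) (Fin n) ℂ) := Matrix.linftyOpNormedRing
  letI : NormedAlgebra ℂ (Matrix (Fin n) (Fin n) ℂ) := Matrix.linftyOpNormedAlgebra
  exact CHexp_sub_one x

lemma CHMcommute_gfun {n : ℕ} {x y : Matrix (Fin n) (Fin n) ℂ} (h : Commute y x) :
    Commute y (CHMgfun x) := by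
  letI : SeminormedRing (Matrix (Fin n) (Fin n) ℂ) := Matrix.linftyOpSemiNormedRing
  letI : NormedRing (Matrix (Fin n) (Fin n) ℂ) := Matrix.linftyOpNormedRing
  letI : NormedAlgebra ℂ (Matrix (Fin n) (Fin n) ℂ) := Matrix.linftyOpNormedAlgebra
  exact CHcommute_gfun h

lemma CHMexp_smul_one {n : ℕ} (c : ℂ) :
    exp (c • (1 : Matrix (Fin n) (Fin n) ℂ)) = Complex.exp c • (1 : Matrix (Fin n) (Fin n) ℂ) := by
  letI : SeminormedRing (Matrix (Fin n) (Fin n) ℂ) := Matrix.linftyOpSemiNormedRing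
  letI : NormedRing (Matrix (Fin n) (Fin n) ℂ) := Matrix.linftyOpNormedRing
  letI : NormedAlgebra ℂ (Matrix (Fin n) (Fin n) ℂ) := Matrix.linftyOpNormedAlgebra
  have hcont : Continuous (algebraMap ℂ (Matrix (Fin n) (Fin n) ℂ)) :=
    continuous_algebraMap _ _
  rw [← Algebra.algebraMap_eq_smul_one, ← Algebra.algebraMap_eq_smul_one,
    Complex.exp_eq_exp_ℂ]
  exact (NormedSpace.map_exp (algebraMap ℂ (Matrix (Fin n) (Fin n) ℂ)) hcont c).symm

end CHhelpers

theorem cayley_hamilton_sampled_AR (p : ℕ) (hp : 1 ≤ p) (Δ : ℝ) (hΔ : 0 < Δ)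
    (lam : Fin p → ℂ) (hdist : Function.Injective lam)
    (A : Matrix (Fin p) (Fin p) ℂ)
    (hA : A.charpoly = ∏ j : Fin p, (Polynomial.X - Polynomial.C (lam j)))
    (φ : ℕ → ℂ)
    (hφ : ∀ z : ℂ, ∏ j : Fin p, (1 - Complex.exp ((Δ : ℂ) * lam j) * z) =
        -∑ j ∈ Finset.range (p + 1), φ j * z ^ j) :
    ∑ j ∈ Finset.range (p + 1), φ j • NormedSpace.exp ((-(j : ℂ) * (Δ : ℂ)) • A) = 0 := by
  classical
  set B : Matrix (Fin p) (Fin p) ℂ := NormedSpace.exp ((-(Δ : ℂ)) • A) with hBdef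
  set l : List (Fin p) := List.finRange p with hl
  -- Step 1: exp of multiples
  have hBj : ∀ j : ℕ, NormedSpace.exp ((-(j : ℂ) * (Δ : ℂ)) • A) = B ^ j := by
    intro j
    have h1 : (-(j : ℂ) * (Δ : ℂ)) • A = j • ((-(Δ : ℂ)) • A) := by
      rw [← Nat.cast_smul_eq_nsmul ℂ, smul_smul]
      congr 1
      ring
    rw [h1, Matrix.exp_nsmul]
  -- Step 2: polynomial identity
  have hQR : (∏ j : Fin p, (1 - C (Complex.exp ((Δ : ℂ) * lam j)) * X)) =
      -∑ j ∈ Finset.range (p + 1), C (φ j) * X ^ j := by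
    apply Polynomial.funext
    intro z
    simpa [eval_prod, eval_finset_sum] using hφ z
  -- Step 3: evaluate at B
  have hfact : (l.map fun j => (1 : Matrix (Fin p) (Fin p) ℂ) -
      Complex.exp ((Δ : ℂ) * lam j) • B).prod =
      -∑ j ∈ Finset.range (p + 1), φ j • B ^ j := by
    have h0 := congrArg (aeval B) hQR
    rw [Fin.prod_univ_def, map_list_prod (aeval B), List.map_map] at h0
    have h2 : ((aeval B) ∘ fun j => 1 - C (Complex.exp ((Δ : ℂ) * lam j)) * X) =
        fun j : Fin p => (1 : Matrix (Fin p) (Fin p) ℂ) - Complex.exp ((Δ : ℂ) * lam j) • B := by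
      funext j
      simp only [Function.comp_apply, map_sub, _root_.map_one, _root_.map_mul, aeval_C,
        aeval_X, ← Algebra.smul_def]
    rw [h2] at h0
    rw [h0]
    simp only [map_neg, map_sum, _root_.map_mul, map_pow, aeval_C, aeval_X, ← Algebra.smul_def]
  -- Step 4: the factored product is zero
  have hzero : (l.map fun j => (1 : Matrix (Fin p) (Fin p) ℂ) -
      Complex.exp ((Δ : ℂ) * lam j) • B).prod = 0 := by
    set Mf : Fin p → Matrix (Fin p) (Fin p) ℂ :=
      fun j => ((Δ : ℂ) * lam j) • (1 : Matrix (Fin p) (Fin p) ℂ) + (-(Δ : ℂ)) • A with hMf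
    have haev : ∀ j, Mf j = aeval A (C ((Δ : ℂ) * lam j) - C (Δ : ℂ) * X) := by
      intro j
      simp only [hMf, map_sub, map_add, map_neg, _root_.map_mul, aeval_C, aeval_X,
        Algebra.algebraMap_eq_smul_one, smul_one_mul, smul_smul, sub_eq_add_neg, neg_smul]
    have hcomm : ∀ i j, Commute (Mf i) (Mf j) := by
      intro i j
      rw [haev i, haev j]
      show _ * _ = _ * _
      rw [← _root_.map_mul, ← _root_.map_mul, mul_comm]
    have hexpM : ∀ j, NormedSpace.exp (Mf j) = Complex.exp ((Δ : ℂ) * lam j) • B := by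
      intro j
      have hcm : Commute (((Δ : ℂ) * lam j) • (1 : Matrix (Fin p) (Fin p) ℂ))
          ((-(Δ : ℂ)) • A) := ((Commute.one_left A).smul_left _).smul_right _
      show NormedSpace.exp (((Δ : ℂ) * lam j) • (1 : Matrix (Fin p) (Fin p) ℂ) +
          (-(Δ : ℂ)) • A) = Complex.exp ((Δ : ℂ) * lam j) • B
      rw [Matrix.exp_add_of_commute _ _ hcm, CHMexp_smul_one, smul_one_mul]
    have key : ∀ j, (1 : Matrix (Fin p) (Fin p) ℂ) - Complex.exp ((Δ : ℂ) * lam j) • B =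
        (-(Mf j)) * CHMgfun (Mf j) := by
      intro j
      rw [← hexpM j, ← neg_sub, CHMexp_sub_one, neg_mul]
    have hmapeq : (l.map fun j => (1 : Matrix (Fin p) (Fin p) ℂ) -
        Complex.exp ((Δ : ℂ) * lam j) • B) =
        (l.map fun j => (-(Mf j)) * CHMgfun (Mf j)) := by
      simp only [key]
    rw [hmapeq, CHlist_prod_mul l (fun j => -(Mf j)) (fun j => CHMgfun (Mf j))
      (fun i _ j _ => (CHMcommute_gfun ((hcomm j i).neg_left)).symm)]
    have hprod0 : ((l.map fun j => -(Mf j)).prod) = 0 := by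
      have heach : (fun j : Fin p => -(Mf j)) =
          fun j => aeval A (C (Δ : ℂ) * (X - C (lam j))) := by
        funext j
        rw [haev j, ← map_neg]
        congr 1
        rw [C_mul]
        ring
      rw [heach]
      have : (l.map fun j : Fin p => (aeval A) (C (Δ : ℂ) * (X - C (lam j)))) =
          ((l.map fun j : Fin p => C (Δ : ℂ) * (X - C (lam j))).map (aeval A)) := by
        rw [List.map_map]; rfl
      rw [this, ← map_list_prod (aeval A)]
      have hpoly : ((l.map fun j : Fin p => C (Δ : ℂ) * (X - C (lam j))).prod) =
          C (Δ : ℂ) ^ p * A.charpoly := by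
        rw [← Fin.prod_univ_def, hA, Finset.prod_mul_distrib, Finset.prod_const,
          Finset.card_univ, Fintype.card_fin]
      rw [hpoly, _root_.map_mul, Matrix.aeval_self_charpoly, mul_zero]
    rw [hprod0, zero_mul]
  -- Conclude
  have hsum : ∑ j ∈ Finset.range (p + 1), φ j • B ^ j = 0 := by
    have h := hfact
    rw [hzero] at h
    exact neg_eq_zero.mp h.symm
  calc ∑ j ∈ Finset.range (p + 1), φ j • NormedSpace.exp ((-(j : ℂ) * (Δ : ℂ)) • A)
      = ∑ j ∈ Finset.range (p + 1), φ j • B ^ j :=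
        Finset.sum_congr rfl (fun j _ => by rw [hBj j])
    _ = 0 := hsum
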